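/- Let n ≥ 2 be an integer and let ρ be a real number with −1/(n−1) ≤ ρ ≤ 1. Then every complex zero of the polynomial p(z) = z^n + 2ρ·Σ_{i=1}^{n−1} z^i + 1 lies on the unit circle, i.e., every z ∈ ℂ with p(z) = 0 satisfies |z| = 1. -/

import Mathlib

open Finset Complex

noncomputable def pfun (n : ℕ) (ρ : ℝ) (z : ℂ) : ℂ :=
  z ^ n + 2 * (ρ : ℂ) * ∑ i ∈ Finset.Icc 1 (n - 1), z ^ i + 1

lemma icc_eq {n : ℕ} (hn : 1 ≤ n) : Finset.Icc 1 (n - 1) = Finset.Ico 1 n := by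
  ext i; simp [Finset.mem_Icc, Finset.mem_Ico]; omega

lemma icc_sum {n : ℕ} (hn : 1 ≤ n) (z : ℂ) :
    ∑ i ∈ Finset.Icc 1 (n - 1), z ^ i = (∑ i ∈ Finset.range n, z ^ i) - 1 := by
  rw [icc_eq hn, Finset.range_eq_Ico, Finset.sum_eq_sum_Ico_succ_bot hn]
  simp

lemma mul_geom (n : ℕ) (z : ℂ) :
    z * ∑ i ∈ Finset.range n, z ^ i = (∑ i ∈ Finset.range n, z ^ i) + z ^ n - 1 := by
  rw [Finset.mul_sum]
  have h := Finset.sum_range_succ' (fun i => z ^ i) n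
  have h2 : ∑ i ∈ Finset.range n, z * z ^ i = ∑ i ∈ Finset.range n, z ^ (i + 1) := by
    apply Finset.sum_congr rfl; intro i _; ring
  have h3 := Finset.sum_range_succ (fun i => z ^ i) n
  rw [h2]
  have h4 := h3.symm.trans h
  simp only [pow_zero] at h4
  linear_combination -h4

lemma pal {n : ℕ} (hn : 1 ≤ n) (ρ : ℝ) (c : ℂ) (hc : c ≠ 0) :
    c ^ n * pfun n ρ c⁻¹ = pfun n ρ c := by
  have hS : c ^ n * ∑ i ∈ Finset.range n, (c⁻¹) ^ i = c * ∑ i ∈ Finset.range n, c ^ i := by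
    rw [Finset.mul_sum, Finset.mul_sum]
    rw [← Finset.sum_range_reflect (fun i => c * c ^ i) n]
    apply Finset.sum_congr rfl
    intro i hi
    simp only [Finset.mem_range] at hi
    rw [← pow_succ', inv_pow, ← pow_sub₀ c hc (le_of_lt hi)]
    congr 1; omega
  have hg := mul_geom n c
  have hmul : c ^ n * (c ^ n)⁻¹ = 1 := mul_inv_cancel₀ (pow_ne_zero _ hc)
  unfold pfun
  rw [icc_sum hn, icc_sum hn, inv_pow]
  linear_combination hmul + (2*(ρ:ℂ)) * hS + (2*(ρ:ℂ)) * hg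

noncomputable def Ffun (n : ℕ) (ρ : ℝ) (θ : ℝ) : ℝ :=
  (Complex.exp (-(↑n * ↑θ / 2) * I) * pfun n ρ (Complex.exp (↑θ * I))).re

lemma conj_pfun (n : ℕ) (ρ : ℝ) (w : ℂ) :
    (starRingEnd ℂ) (pfun n ρ w) = pfun n ρ ((starRingEnd ℂ) w) := by
  simp [pfun, map_sum, map_ofNat]

lemma G_eq {n : ℕ} (hn : 1 ≤ n) (ρ : ℝ) (θ : ℝ) :
    Complex.exp (-(↑n * ↑θ / 2) * I) * pfun n ρ (Complex.exp (↑θ * I))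
      = ((Ffun n ρ θ : ℝ) : ℂ) := by
  set c := Complex.exp ((θ:ℂ) * I) with hcdef
  have hc0 : c ≠ 0 := Complex.exp_ne_zero _
  set G := Complex.exp (-(↑n * ↑θ / 2) * I) * pfun n ρ c with hG
  have hconj : (starRingEnd ℂ) G = G := by
    rw [hG, map_mul, conj_pfun, ← Complex.exp_conj]
    have h1 : (starRingEnd ℂ) (-(↑n * ↑θ / 2) * I) = (↑n * ↑θ / 2) * I := by
      simp [map_ofNat]
    have h2 : (starRingEnd ℂ) c = c⁻¹ := by
      rw [hcdef, ← Complex.exp_conj, ← Complex.exp_neg]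
      congr 1
      simp
    rw [h1, h2]
    have h4 : pfun n ρ c⁻¹ = (c ^ n)⁻¹ * pfun n ρ c := by
      rw [← pal hn ρ c hc0, ← mul_assoc, inv_mul_cancel₀ (pow_ne_zero _ hc0), one_mul]
    rw [h4]
    have h5 : c ^ n = Complex.exp (↑n * (↑θ * I)) := by
      rw [Complex.exp_nat_mul]
    rw [h5, ← Complex.exp_neg, ← mul_assoc, ← Complex.exp_add]
    congr 2
    ring
  rw [Complex.conj_eq_iff_re] at hconj
  unfold Ffun
  exact hconj.symm

lemma exp_theta_inj {a b : ℝ} (ha : 0 ≤ a) (hb : a < 2*Real.pi) (hc : 0 ≤ b)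
    (hd : b < 2*Real.pi) (h : Complex.exp (a*I) = Complex.exp (b*I)) : a = b := by
  rw [Complex.exp_eq_exp_iff_exists_int] at h
  obtain ⟨m, hm⟩ := h
  rw [show ((b:ℂ)*I + m*(2*(Real.pi:ℂ)*I)) = ((b + m*(2*Real.pi):ℝ):ℂ)*I by
    push_cast; ring] at hm
  have h2 := mul_right_cancel₀ Complex.I_ne_zero hm
  have h3 : a = b + m*(2*Real.pi) := by exact_mod_cast h2
  have hpi := Real.pi_pos
  rcases lt_trichotomy m 0 with hm0 | hm0 | hm0
  · exfalso
    have : (m:ℝ) ≤ -1 := by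
      have h4 : m ≤ -1 := by omega
      exact_mod_cast h4
    nlinarith
  · rw [h3, hm0]; push_cast; ring
  · exfalso
    have : (1:ℝ) ≤ m := by exact_mod_cast hm0
    nlinarith

lemma exp_theta_ne_one {θ : ℝ} (h1 : 0 < θ) (h2 : θ < 2*Real.pi) :
    Complex.exp (θ * I) ≠ 1 := by
  intro h
  have h0 : Complex.exp ((0:ℝ) * I) = 1 := by simp
  have := exp_theta_inj (le_of_lt h1) h2 le_rfl (by positivity) (h.trans h0.symm)
  linarith

lemma pfun_one {n : ℕ} (hn : 1 ≤ n) (ρ : ℝ) :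
    pfun n ρ 1 = ((2 + 2*ρ*((n:ℝ)-1) : ℝ) : ℂ) := by
  unfold pfun
  simp only [one_pow, Finset.sum_const, Nat.card_Icc, nsmul_eq_mul, mul_one]
  have : ((n - 1 + 1 - 1 : ℕ) : ℂ) = (n : ℂ) - 1 := by
    have : n - 1 + 1 - 1 = n - 1 := by omega
    rw [this, Nat.cast_sub hn]; simp
  rw [this]
  push_cast
  ring

lemma pfun_root_of_unity {n : ℕ} (ρ : ℝ) {c : ℂ} (hc : c ^ n = 1) (hc1 : c ≠ 1)
    (hn : 1 ≤ n) : pfun n ρ c = ((2 - 2*ρ : ℝ) : ℂ) := by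
  unfold pfun
  rw [icc_sum hn, geom_sum_eq hc1, hc]
  simp
  push_cast
  ring

lemma prefactor_eq (k : ℕ) : Complex.exp (-((k:ℂ) * Real.pi) * I) = (-1)^k := by
  rw [show -((k:ℂ)*(Real.pi:ℂ))*I = (k:ℕ)*(-((Real.pi:ℂ)*I)) by push_cast; ring,
    Complex.exp_nat_mul, Complex.exp_neg, Complex.exp_pi_mul_I]
  norm_num

lemma Ffun_zero {n : ℕ} (hn : 1 ≤ n) (ρ : ℝ) :
    Ffun n ρ 0 = 2 + 2*ρ*((n:ℝ)-1) := by
  unfold Ffun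
  simp [pfun_one hn]

lemma Ffun_grid {n k : ℕ} (hn : 1 ≤ n) (ρ : ℝ) (hk1 : 1 ≤ k) (hk2 : k < n) :
    Ffun n ρ (2*Real.pi*k/n) = (-1)^k * (2 - 2*ρ) := by
  have hn0 : (n:ℝ) ≠ 0 := by positivity
  have hn0' : (n:ℂ) ≠ 0 := by exact_mod_cast (show ((n:ℝ):ℂ) ≠ 0 by exact_mod_cast hn0)
  have hpi := Real.pi_pos
  set θ : ℝ := 2*Real.pi*k/n with hθ
  have hcn : Complex.exp ((θ:ℂ) * I) ^ n = 1 := by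
    rw [← Complex.exp_nat_mul]
    rw [show (n:ℂ) * (((θ:ℝ):ℂ) * I) = (k:ℕ) * (2*(Real.pi:ℂ)*I) by
      push_cast [hθ]; field_simp]
    rw [Complex.exp_nat_mul, Complex.exp_two_pi_mul_I, one_pow]
  have hθpos : 0 < θ := by
    rw [hθ]
    have : (0:ℝ) < (k:ℝ) := by exact_mod_cast hk1
    positivity
  have hθlt : θ < 2*Real.pi := by
    rw [hθ, div_lt_iff₀ (by positivity)]
    have hkn : (k:ℝ) < (n:ℝ) := by exact_mod_cast hk2
    nlinarith
  have hc1 : Complex.exp ((θ:ℝ) * I) ≠ 1 := exp_theta_ne_one hθpos hθlt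
  unfold Ffun
  rw [pfun_root_of_unity ρ hcn hc1 hn]
  rw [show -((n:ℂ) * ((θ:ℝ):ℂ) / 2) * I = -((k:ℂ) * Real.pi) * I by
    push_cast [hθ]; field_simp]
  rw [prefactor_eq]
  rw [show ((-1:ℂ))^k = (((-1:ℝ)^k:ℝ):ℂ) by push_cast; ring]
  rw [← Complex.ofReal_mul, Complex.ofReal_re]

lemma Ffun_two_pi {n : ℕ} (hn : 1 ≤ n) (ρ : ℝ) :
    Ffun n ρ (2*Real.pi) = (-1)^n * (2 + 2*ρ*((n:ℝ)-1)) := by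
  unfold Ffun
  have h1 : Complex.exp (((2*Real.pi:ℝ):ℂ) * I) = 1 := by
    push_cast
    exact Complex.exp_two_pi_mul_I
  rw [h1, pfun_one hn ρ]
  rw [show -((n:ℂ) * ((2*Real.pi:ℝ):ℂ) / 2) * I = -((n:ℂ) * Real.pi) * I by
    push_cast; ring]
  rw [prefactor_eq]
  rw [show ((-1:ℂ))^n = (((-1:ℝ)^n:ℝ):ℂ) by push_cast; ring]
  rw [← Complex.ofReal_mul, Complex.ofReal_re]

lemma Ffun_continuous (n : ℕ) (ρ : ℝ) : Continuous (Ffun n ρ) := by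
  unfold Ffun pfun
  fun_prop

lemma root_of_Ffun_zero {n : ℕ} (hn : 1 ≤ n) (ρ : ℝ) {θ : ℝ} (h : Ffun n ρ θ = 0) :
    pfun n ρ (Complex.exp ((θ:ℝ) * I)) = 0 := by
  have hG := G_eq hn ρ θ
  rw [h] at hG
  simp only [Complex.ofReal_zero] at hG
  rcases mul_eq_zero.mp hG with h1 | h1
  · exact absurd h1 (Complex.exp_ne_zero _)
  · exact h1

lemma ivt_root {F : ℝ → ℝ} (hF : Continuous F) {a b : ℝ} (hab : a < b)
    (h : F a * F b < 0) : ∃ θ, θ ∈ Set.Ioo a b ∧ F θ = 0 := by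
  rcases mul_neg_iff.mp h with ⟨h1, h2⟩ | ⟨h1, h2⟩
  · have := intermediate_value_Ioo' (le_of_lt hab) hF.continuousOn
    have h0 : (0:ℝ) ∈ Set.Ioo (F b) (F a) := ⟨h2, h1⟩
    obtain ⟨θ, hθ, hFθ⟩ := this h0
    exact ⟨θ, hθ, hFθ⟩
  · have := intermediate_value_Ioo (le_of_lt hab) hF.continuousOn
    have h0 : (0:ℝ) ∈ Set.Ioo (F a) (F b) := ⟨h1, h2⟩
    obtain ⟨θ, hθ, hFθ⟩ := this h0
    exact ⟨θ, hθ, hFθ⟩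

noncomputable def xg (n : ℕ) (k : ℕ) : ℝ := 2*Real.pi*k/n

lemma xg_lt {n : ℕ} (hn : 1 ≤ n) {k l : ℕ} (h : k < l) : xg n k < xg n l := by
  unfold xg
  have hpi := Real.pi_pos
  have hn0 : (0:ℝ) < n := by exact_mod_cast hn
  have hkl : (k:ℝ) < l := by exact_mod_cast h
  gcongr

lemma xg_zero (n : ℕ) : xg n 0 = 0 := by unfold xg; simp

lemma xg_top {n : ℕ} (hn : 1 ≤ n) : xg n n = 2*Real.pi := by
  unfold xg
  have hn0 : (n:ℝ) ≠ 0 := by positivity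
  field_simp

lemma xg_eq (n k : ℕ) : xg n k = 2*Real.pi*k/n := rfl

lemma neg_pow_succ_mul (k : ℕ) (d e : ℝ) :
    ((-1:ℝ)^k * d) * ((-1:ℝ)^(k+1) * e) = -(d*e) := by
  have h1 : (-1:ℝ)^(k+1) = -(-1)^k := by rw [pow_succ]; ring
  have h2 : ((-1:ℝ)^k)*((-1:ℝ)^k) = 1 := by
    rw [← pow_add, show k+k = 2*k by ring, pow_mul]; norm_num
  rw [h1]; linear_combination (-(d*e)) * h2

lemma mid_interval_root {n : ℕ} (hn : 2 ≤ n) {ρ : ℝ} (hρ1 : ρ < 1) {k : ℕ}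
    (hk1 : 1 ≤ k) (hk2 : k + 1 ≤ n - 1) :
    ∃ θ, θ ∈ Set.Ioo (xg n k) (xg n (k+1)) ∧ Ffun n ρ θ = 0 := by
  have hn1 : 1 ≤ n := by omega
  have hd : 0 < 2 - 2*ρ := by linarith
  have hv1 : Ffun n ρ (xg n k) = (-1)^k * (2 - 2*ρ) :=
    Ffun_grid hn1 ρ hk1 (by omega)
  have hv2 : Ffun n ρ (xg n (k+1)) = (-1)^(k+1) * (2 - 2*ρ) :=
    Ffun_grid hn1 ρ (by omega) (by omega)
  apply ivt_root (Ffun_continuous n ρ) (xg_lt hn1 (by omega))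
  rw [hv1, hv2, neg_pow_succ_mul]
  nlinarith

lemma generic_interval_root {n : ℕ} (hn : 2 ≤ n) {ρ : ℝ} (hρ1 : ρ < 1)
    (hρ0 : -(1/((n:ℝ)-1)) < ρ) (k : ℕ) (hk : k < n) :
    ∃ θ, θ ∈ Set.Ioo (xg n k) (xg n (k+1)) ∧ Ffun n ρ θ = 0 := by
  have hn1 : 1 ≤ n := by omega
  have hd : 0 < 2 - 2*ρ := by linarith
  have hnR : (0:ℝ) < (n:ℝ) - 1 := by
    have : (2:ℝ) ≤ n := by exact_mod_cast hn
    linarith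
  have he : 0 < 2 + 2*ρ*((n:ℝ)-1) := by
    have := mul_lt_mul_of_pos_right hρ0 hnR
    rw [neg_mul, div_mul_cancel₀] at this
    · linarith
    · positivity
  by_cases hk0 : k = 0
  · -- first interval [0, x 1]
    subst hk0
    apply ivt_root (Ffun_continuous n ρ) (xg_lt hn1 (by omega))
    have e1 : xg n (0+1) = 2*Real.pi*((1:ℕ):ℝ)/n := by norm_num [xg_eq]
    rw [show xg n 0 = (0:ℝ) from xg_zero n, e1, Ffun_zero hn1 ρ,
      Ffun_grid hn1 ρ le_rfl (by omega)]
    norm_num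
    nlinarith
  · by_cases hkn : k = n - 1
    · -- last interval [x (n-1), 2π]
      subst hkn
      apply ivt_root (Ffun_continuous n ρ) (xg_lt hn1 (by omega))
      have e1 : xg n (n-1) = 2*Real.pi*(((n-1:ℕ)):ℝ)/n := by rw [xg_eq]
      rw [show n - 1 + 1 = n by omega, xg_top hn1, Ffun_two_pi hn1 ρ, e1,
        Ffun_grid hn1 ρ (by omega) (by omega)]
      have hpow : ((-1:ℝ))^n = -(-1)^(n-1) := by
        conv_lhs => rw [show n = (n-1)+1 by omega]
        rw [pow_succ]; ring
      rw [hpow]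
      have h2 : ((-1:ℝ)^(n-1))*((-1:ℝ)^(n-1)) = 1 := by
        rw [← pow_add, show (n-1)+(n-1) = 2*(n-1) by ring, pow_mul]; norm_num
      have hprod : (-1:ℝ)^(n-1) * (2 - 2*ρ) * (-(-1:ℝ)^(n-1) * (2 + 2*ρ*((n:ℝ)-1)))
          = -((2 - 2*ρ) * (2 + 2*ρ*((n:ℝ)-1))) := by
        linear_combination (-((2 - 2*ρ) * (2 + 2*ρ*((n:ℝ)-1)))) * h2
      rw [hprod]
      nlinarith
    · exact mid_interval_root hn hρ1 (by omega) (by omega)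

open Polynomial in
noncomputable def Pp (n : ℕ) (ρ : ℝ) : Polynomial ℂ :=
  X ^ n + (C (2*(ρ:ℂ)) * (∑ i ∈ Finset.Icc 1 (n-1), X ^ i) + C 1)

open Polynomial in
lemma Pp_eval (n : ℕ) (ρ : ℝ) (w : ℂ) : (Pp n ρ).eval w = pfun n ρ w := by
  simp [Pp, pfun, eval_finset_sum]
  ring

open Polynomial in
lemma Pp_degree {n : ℕ} (hn : 1 ≤ n) (ρ : ℝ) : (Pp n ρ).degree = n := by
  unfold Pp
  rw [Polynomial.degree_add_eq_left_of_degree_lt, Polynomial.degree_X_pow]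
  rw [Polynomial.degree_X_pow]
  apply lt_of_le_of_lt (Polynomial.degree_add_le _ _)
  rw [max_lt_iff]
  constructor
  · apply lt_of_le_of_lt (le_trans (Polynomial.degree_mul_le _ _)
      (by simpa using add_le_add_left (Polynomial.degree_C_le) _))
    apply lt_of_le_of_lt (Polynomial.degree_sum_le _ _)
    rw [Finset.sup_lt_iff (by exact WithBot.bot_lt_coe n)]
    intro i hi
    rw [Polynomial.degree_X_pow]
    have : i < n := by
      have := (Finset.mem_Icc.mp hi).2
      omega
    exact_mod_cast this
  · apply lt_of_le_of_lt (Polynomial.degree_C_le)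
    exact_mod_cast hn

lemma Pp_ne_zero {n : ℕ} (hn : 1 ≤ n) (ρ : ℝ) : Pp n ρ ≠ 0 := by
  intro h
  have := Pp_degree hn ρ
  rw [h, Polynomial.degree_zero] at this
  exact absurd this (by simp)

lemma Pp_natDegree {n : ℕ} (hn : 1 ≤ n) (ρ : ℝ) : (Pp n ρ).natDegree = n :=
  Polynomial.natDegree_eq_of_degree_eq_some (Pp_degree hn ρ)

open Polynomial in
lemma Pp_deriv_eval_one {n : ℕ} (hn : 1 ≤ n) (ρ : ℝ) :
    (Polynomial.derivative (Pp n ρ)).eval 1 = (n:ℂ) * (1 + (ρ:ℂ)*((n:ℂ)-1)) := by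
  unfold Pp
  rw [derivative_add, derivative_add, derivative_C, derivative_mul, derivative_C,
    derivative_X_pow, Polynomial.derivative_sum]
  have hsum : ∀ i ∈ Finset.Icc 1 (n-1), derivative ((X:ℂ[X])^i) = C (i:ℂ) * X^(i-1) := by
    intro i _; rw [derivative_X_pow]
  rw [Finset.sum_congr rfl hsum]
  simp only [eval_add, eval_mul, eval_C, eval_pow, eval_X, eval_finset_sum, zero_mul,
    eval_zero, add_zero, zero_add, one_pow, mul_one]
  have hgauss : (∑ i ∈ Finset.Icc 1 (n-1), (i:ℂ)) * 2 = (n:ℂ) * ((n:ℂ) - 1) := by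
    have h1 : ∑ i ∈ Finset.Icc 1 (n-1), i = ∑ i ∈ Finset.range n, i := by
      rw [icc_eq hn, Finset.range_eq_Ico, Finset.sum_eq_sum_Ico_succ_bot hn]
      simp
    have h2 := Finset.sum_range_id_mul_two n
    have h3 : (((∑ i ∈ Finset.range n, i) * 2 : ℕ) : ℂ) = ((n * (n-1) : ℕ) : ℂ) := by
      exact_mod_cast congrArg (Nat.cast : ℕ → ℂ) h2
    push_cast [Nat.cast_sub hn] at h3
    rw [← Nat.cast_sum, h1]
    push_cast
    exact h3
  linear_combination (ρ:ℂ) * hgauss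

lemma abs_eq_one_of_pow {z : ℂ} {n : ℕ} (hn : 1 ≤ n) (h : z ^ n = 1) :
    ‖z‖ = 1 := by
  have h1 : (‖z‖) ^ n = 1 := by
    rw [← norm_pow, h, norm_one]
  rcases lt_trichotomy (‖z‖) 1 with h2 | h2 | h2
  · exfalso
    have := pow_lt_one₀ (norm_nonneg z) h2 (show n ≠ 0 by omega)
    rw [h1] at this; exact lt_irrefl _ this
  · exact h2
  · exfalso
    have := one_lt_pow₀ h2 (show n ≠ 0 by omega)
    rw [h1] at this; exact lt_irrefl _ this

lemma case_rho_one {n : ℕ} (hn : 2 ≤ n) {z : ℂ} (hz : pfun n 1 z = 0) :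
    ‖z‖ = 1 := by
  have hn1 : 1 ≤ n := by omega
  have hfac : (z + 1) * (∑ i ∈ Finset.range n, z ^ i) = pfun n 1 z := by
    unfold pfun
    rw [icc_sum hn1]
    have := mul_geom n z
    push_cast
    linear_combination this
  rw [hz] at hfac
  rcases mul_eq_zero.mp hfac with h | h
  · have : z = -1 := by linear_combination h
    rw [this]
    simp
  · have hzn : z ^ n = 1 := by
      have := mul_geom n z
      rw [h] at this
      simp at this
      linear_combination -this
    exact abs_eq_one_of_pow hn1 hzn

lemma xg_nonneg (n k : ℕ) : 0 ≤ xg n k := by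
  unfold xg
  have := Real.pi_pos
  positivity

lemma xg_mono {n : ℕ} (hn : 1 ≤ n) {k l : ℕ} (h : k ≤ l) : xg n k ≤ xg n l := by
  rcases eq_or_lt_of_le h with rfl | h
  · exact le_refl _
  · exact le_of_lt (xg_lt hn h)

lemma theta_props {n : ℕ} (hn : 1 ≤ n) {θf : ℕ → ℝ}
    (h : ∀ k, k < n → θf k ∈ Set.Ioo (xg n k) (xg n (k+1))) :
    (∀ k, k < n → 0 ≤ θf k ∧ θf k < 2*Real.pi) ∧
      (∀ k l, k < n → l < n →
        Complex.exp ((θf k : ℝ) * I) = Complex.exp ((θf l : ℝ) * I) → k = l) := by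
  have hb : ∀ k, k < n → 0 ≤ θf k ∧ θf k < 2*Real.pi := by
    intro k hk
    obtain ⟨h1, h2⟩ := h k hk
    constructor
    · exact le_trans (xg_nonneg n k) (le_of_lt h1)
    · calc θf k < xg n (k+1) := h2
        _ ≤ xg n n := xg_mono hn (by omega)
        _ = 2*Real.pi := xg_top hn
  refine ⟨hb, ?_⟩
  have key : ∀ k l, k < l → l < n → θf k < θf l := by
    intro k l hkl hl
    calc θf k < xg n (k+1) := (h k (by omega)).2
      _ ≤ xg n l := xg_mono hn (by omega)
      _ < θf l := (h l hl).1
  intro k l hk hl heq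
  rcases lt_trichotomy k l with hc | hc | hc
  · exfalso
    have := key k l hc hl
    have heq2 := exp_theta_inj (hb k hk).1 (hb k hk).2 (hb l hl).1 (hb l hl).2 heq
    linarith
  · exact hc
  · exfalso
    have := key l k hc hk
    have heq2 := exp_theta_inj (hb k hk).1 (hb k hk).2 (hb l hl).1 (hb l hl).2 heq
    linarith

lemma case_generic {n : ℕ} (hn : 2 ≤ n) {ρ : ℝ} (hρ0 : -(1/((n:ℝ)-1)) < ρ)
    (hρ1 : ρ < 1) {z : ℂ} (hz : pfun n ρ z = 0) : ‖z‖ = 1 := by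
  by_contra habs
  have hn1 : 1 ≤ n := by omega
  have hexist : ∀ k : ℕ, ∃ θ : ℝ,
      k < n → θ ∈ Set.Ioo (xg n k) (xg n (k+1)) ∧ Ffun n ρ θ = 0 := by
    intro k
    by_cases hk : k < n
    · obtain ⟨θ, h1, h2⟩ := generic_interval_root hn hρ1 hρ0 k hk
      exact ⟨θ, fun _ => ⟨h1, h2⟩⟩
    · exact ⟨0, fun hk' => absurd hk' hk⟩
  choose θf hθf using hexist
  obtain ⟨hb, hinj⟩ := theta_props hn1 (θf := θf) (fun k hk => (hθf k hk).1)
  set T : Finset ℂ := (Finset.range n).image (fun k => Complex.exp ((θf k : ℝ) * I))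
    with hT
  have hcardT : T.card = n := by
    rw [hT, Finset.card_image_of_injOn, Finset.card_range]
    intro a ha b hb' heq
    exact hinj a b (Finset.mem_range.mp ha) (Finset.mem_range.mp hb') heq
  have hroots : ∀ w ∈ T, (Pp n ρ).eval w = 0 := by
    intro w hw
    rw [hT, Finset.mem_image] at hw
    obtain ⟨k, hk, rfl⟩ := hw
    rw [Pp_eval]
    exact root_of_Ffun_zero hn1 ρ (hθf k (Finset.mem_range.mp hk)).2
  have hznotT : z ∉ T := by
    intro hzT
    rw [hT, Finset.mem_image] at hzT
    obtain ⟨k, _, hk2⟩ := hzT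
    rw [← hk2] at habs
    exact habs (Complex.norm_exp_ofReal_mul_I _)
  have hsub : insert z T ⊆ (Pp n ρ).roots.toFinset := by
    intro w hw
    rw [Multiset.mem_toFinset, Polynomial.mem_roots (Pp_ne_zero hn1 ρ)]
    rcases Finset.mem_insert.mp hw with rfl | hw'
    · rw [Polynomial.IsRoot, Pp_eval]; exact hz
    · exact hroots w hw'
  have hcard : n + 1 ≤ n := by
    calc n + 1 = (insert z T).card := by
          rw [Finset.card_insert_of_notMem hznotT, hcardT]
      _ ≤ (Pp n ρ).roots.toFinset.card := Finset.card_le_card hsub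
      _ ≤ Multiset.card (Pp n ρ).roots := Multiset.toFinset_card_le _
      _ ≤ (Pp n ρ).natDegree := Polynomial.card_roots' _
      _ = n := Pp_natDegree hn1 ρ
  omega

open Polynomial in
lemma case_boundary {n : ℕ} (hn : 2 ≤ n) {ρ : ℝ} (hρ : ρ = -(1/((n:ℝ)-1)))
    {z : ℂ} (hz : pfun n ρ z = 0) : ‖z‖ = 1 := by
  by_contra habs
  have hn1 : 1 ≤ n := by omega
  have hnR : (0:ℝ) < (n:ℝ) - 1 := by
    have : (2:ℝ) ≤ n := by exact_mod_cast hn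
    linarith
  have hnR' : ((n:ℝ) - 1 : ℝ) ≠ 0 := ne_of_gt hnR
  have hρ1 : ρ < 1 := by
    rw [hρ]
    have : 0 < 1/((n:ℝ)-1) := by positivity
    linarith
  -- 1 is a root of P
  have hP1 : (Pp n ρ).eval 1 = 0 := by
    rw [Pp_eval, pfun_one hn1]
    rw [hρ]
    rw [show (2 + 2*(-(1/((n:ℝ)-1)))*((n:ℝ)-1) : ℝ) = 0 by field_simp; ring]
    simp
  obtain ⟨g, hPg⟩ := Polynomial.dvd_iff_isRoot.mpr hP1
  have hg0 : g ≠ 0 := by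
    intro h
    apply Pp_ne_zero hn1 ρ
    rw [hPg, h, mul_zero]
  have hgdeg : g.natDegree = n - 1 := by
    have := Pp_natDegree hn1 ρ
    rw [hPg, Polynomial.natDegree_mul (Polynomial.X_sub_C_ne_zero 1) hg0,
      Polynomial.natDegree_X_sub_C] at this
    omega
  -- 1 is a root of g
  have hg1 : g.eval 1 = 0 := by
    have hd := Pp_deriv_eval_one hn1 ρ
    rw [hPg] at hd
    rw [Polynomial.derivative_mul] at hd
    simp only [Polynomial.derivative_X_sub_C, one_mul, Polynomial.eval_add,
      Polynomial.eval_mul, Polynomial.eval_sub, Polynomial.eval_X, Polynomial.eval_C,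
      sub_self, zero_mul, add_zero] at hd
    rw [hd, hρ]
    have hc : ((n:ℂ) - 1) ≠ 0 := by
      have : (((n:ℝ) - 1 : ℝ) : ℂ) ≠ 0 := by exact_mod_cast hnR'
      push_cast at this
      exact this
    rw [show ((-(1/((n:ℝ)-1)) : ℝ) : ℂ) = -(1/((n:ℂ)-1)) by push_cast; ring]
    field_simp
    ring
  -- roots from interior intervals
  have hexist : ∀ k : ℕ, ∃ θ : ℝ,
      (1 ≤ k ∧ k + 1 ≤ n - 1) → θ ∈ Set.Ioo (xg n k) (xg n (k+1)) ∧ Ffun n ρ θ = 0 := by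
    intro k
    by_cases hk : 1 ≤ k ∧ k + 1 ≤ n - 1
    · obtain ⟨θ, h1, h2⟩ := mid_interval_root hn hρ1 hk.1 hk.2
      exact ⟨θ, fun _ => ⟨h1, h2⟩⟩
    · exact ⟨0, fun hk' => absurd hk' hk⟩
  choose θf hθf using hexist
  set T : Finset ℂ := (Finset.Ico 1 (n-1)).image (fun k => Complex.exp ((θf k : ℝ) * I))
    with hT
  have hmemT : ∀ k, k ∈ Finset.Ico 1 (n-1) →
      (θf k ∈ Set.Ioo (xg n k) (xg n (k+1)) ∧ Ffun n ρ (θf k) = 0) := by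
    intro k hk
    rw [Finset.mem_Ico] at hk
    exact hθf k ⟨hk.1, by omega⟩
  have hbnd : ∀ k, k ∈ Finset.Ico 1 (n-1) → 0 < θf k ∧ θf k < 2*Real.pi := by
    intro k hk
    obtain ⟨⟨h1, h2⟩, _⟩ := hmemT k hk
    rw [Finset.mem_Ico] at hk
    constructor
    · have : 0 ≤ xg n k := xg_nonneg n k
      have hx : xg n 1 ≤ xg n k := xg_mono hn1 hk.1
      have hx0 : 0 < xg n 1 := by
        rw [show (0:ℝ) = xg n 0 from (xg_zero n).symm]
        exact xg_lt hn1 (by omega)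
      linarith
    · have : xg n (k+1) ≤ xg n n := xg_mono hn1 (by omega)
      rw [xg_top hn1] at this
      linarith
  have hinjT : ∀ k ∈ Finset.Ico 1 (n-1), ∀ l ∈ Finset.Ico 1 (n-1),
      Complex.exp ((θf k : ℝ) * I) = Complex.exp ((θf l : ℝ) * I) → k = l := by
    intro k hk l hl heq
    have key : ∀ a b, a ∈ Finset.Ico 1 (n-1) → b ∈ Finset.Ico 1 (n-1) → a < b →
        θf a < θf b := by
      intro a b ha hb hab
      calc θf a < xg n (a+1) := (hmemT a ha).1.2
        _ ≤ xg n b := xg_mono hn1 (by omega)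
        _ < θf b := (hmemT b hb).1.1
    have hbk := hbnd k hk
    have hbl := hbnd l hl
    have := exp_theta_inj (le_of_lt hbk.1) hbk.2 (le_of_lt hbl.1) hbl.2 heq
    rcases lt_trichotomy k l with hc | hc | hc
    · exfalso; have := key k l hk hl hc; linarith
    · exact hc
    · exfalso; have := key l k hl hk hc; linarith
  -- all elements of T are roots of g, distinct from 1
  have hTroot : ∀ w ∈ T, g.eval w = 0 ∧ w ≠ 1 := by
    intro w hw
    rw [hT, Finset.mem_image] at hw
    obtain ⟨k, hk, rfl⟩ := hw
    have hb := hbnd k hk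
    have hne1 : Complex.exp ((θf k : ℝ) * I) ≠ 1 := exp_theta_ne_one hb.1 hb.2
    have hProot : (Pp n ρ).eval (Complex.exp ((θf k : ℝ) * I)) = 0 := by
      rw [Pp_eval]
      exact root_of_Ffun_zero hn1 ρ (hmemT k hk).2
    rw [hPg, Polynomial.eval_mul] at hProot
    rcases mul_eq_zero.mp hProot with h | h
    · exfalso
      simp only [Polynomial.eval_sub, Polynomial.eval_X, Polynomial.eval_C] at h
      exact hne1 (by linear_combination h)
    · exact ⟨h, hne1⟩
  -- z is a root of g, z ≠ 1, abs considerations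
  have hz1 : z ≠ 1 := by
    intro h
    rw [h] at habs
    simp at habs
  have hzg : g.eval z = 0 := by
    have : (Pp n ρ).eval z = 0 := by rw [Pp_eval]; exact hz
    rw [hPg, Polynomial.eval_mul] at this
    rcases mul_eq_zero.mp this with h | h
    · exfalso
      simp only [Polynomial.eval_sub, Polynomial.eval_X, Polynomial.eval_C] at h
      exact hz1 (by linear_combination h)
    · exact h
  -- assemble the finset
  have hcardT : T.card = n - 2 := by
    rw [hT, Finset.card_image_of_injOn, Nat.card_Ico]
    · omega
    · intro a ha b hb heq
      exact hinjT a ha b hb heq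
  have h1T : (1:ℂ) ∉ T := by
    intro h
    exact (hTroot 1 h).2 rfl
  have hzT : z ∉ insert (1:ℂ) T := by
    intro h
    rcases Finset.mem_insert.mp h with h | h
    · exact hz1 h
    · rw [hT, Finset.mem_image] at h
      obtain ⟨k, _, hk2⟩ := h
      rw [← hk2] at habs
      exact habs (Complex.norm_exp_ofReal_mul_I _)
  have hsub : insert z (insert 1 T) ⊆ g.roots.toFinset := by
    intro w hw
    rw [Multiset.mem_toFinset, Polynomial.mem_roots hg0]
    rcases Finset.mem_insert.mp hw with rfl | hw'
    · exact hzg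
    · rcases Finset.mem_insert.mp hw' with rfl | hw''
      · exact hg1
      · exact (hTroot w hw'').1
  have hcard : n ≤ n - 1 := by
    calc n = (insert z (insert 1 T)).card := by
          rw [Finset.card_insert_of_notMem hzT, Finset.card_insert_of_notMem h1T,
            hcardT]
          omega
      _ ≤ g.roots.toFinset.card := Finset.card_le_card hsub
      _ ≤ Multiset.card g.roots := Multiset.toFinset_card_le _
      _ ≤ g.natDegree := Polynomial.card_roots' _
      _ = n - 1 := hgdeg
  omega

/-- For an integer `n ≥ 2` and a real `ρ` with `-1/(n-1) ≤ ρ ≤ 1`,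
every complex zero of `p(z) = z^n + 2ρ·Σ_{i=1}^{n-1} z^i + 1` lies on the unit circle. -/
theorem zeros_on_unit_circle (n : ℕ) (hn : 2 ≤ n) (ρ : ℝ)
    (hρ₁ : -(1 / ((n : ℝ) - 1)) ≤ ρ) (hρ₂ : ρ ≤ 1) (z : ℂ)
    (hz : z ^ n + 2 * (ρ : ℂ) * ∑ i ∈ Finset.Icc 1 (n - 1), z ^ i + 1 = 0) :
    ‖z‖ = 1 := by
  have hz' : pfun n ρ z = 0 := hz
  rcases eq_or_lt_of_le hρ₂ with h1 | h1
  · subst h1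
    exact case_rho_one hn hz'
  · rcases eq_or_lt_of_le hρ₁ with h2 | h2
    · exact case_boundary hn h2.symm hz'
    · exact case_generic hn h2 h1 hz'
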